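/- Penalty-approximation bound for the inner solution (appendix Lemma). Assume the mixing-matrix assumption with σ < 1 and that each g_i(x,·) is μ_g-strongly convex and continuous. Fix x ∈ ℝ^{n d1}. Let y*(x) be the minimizer of y ↦ 1ᵀ𝐠(x,y) over the consensus subspace {y : (I_{n d2}−𝐖)y = 0}, and for β > 0 let y̌*(x) be the minimizer of G(x,y) := (1/(2β)) yᵀ(I_{n d2}−𝐖)y + 1ᵀ𝐠(x,y). Then there exists a constant L̂_g > 0, independent of β, such that for all β ∈ (0, 1]: ‖y*(x) − y̌*(x)‖ ≤ 2 L̂_g β/(1−σ) + 2 L̂_g β^{1/2}/((1−σ)^{1/2} μ_g^{1/2}). -/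

import Mathlib

open Matrix Kronecker Finset Function
open scoped RealInnerProductSpace

noncomputable section

/-- Euclidean space `ℝ^d`. -/
abbrev Vec (d : ℕ) : Type := EuclideanSpace ℝ (Fin d)

/-- Concatenated (stacked) Euclidean space `ℝ^{n·d}`, with `n` blocks of size `d`. -/
abbrev BVec (n d : ℕ) : Type := EuclideanSpace ℝ (Fin n × Fin d)

/-- Block `i` of a concatenated vector `x = [x₁; …; xₙ]`. -/
def blk {n d : ℕ} (x : BVec n d) (i : Fin n) : Vec d := WithLp.toLp 2 (fun a => x (i, a))

/-- Block-diagonal matrix built from `n` blocks. -/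
def blockDiag {n d d' : ℕ} (A : Fin n → Matrix (Fin d) (Fin d') ℝ) :
    Matrix (Fin n × Fin d) (Fin n × Fin d') ℝ :=
  Matrix.of fun p q => if p.1 = q.1 then A p.1 p.2 q.2 else 0

/-- Hessian of `gi` w.r.t. the second (inner) variable: entry `(a,b)` is `∂_{y_a}∂_{y_b} gi(x,y)`. -/
def hessYY {d1 d2 : ℕ} (gi : Vec d1 → Vec d2 → ℝ) (x : Vec d1) (y : Vec d2) :
    Matrix (Fin d2) (Fin d2) ℝ :=
  Matrix.of fun a b =>
    fderiv ℝ (fun y' => fderiv ℝ (gi x) y' (EuclideanSpace.single b 1)) y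
      (EuclideanSpace.single a 1)

/-- Mixed Hessian of `gi`: entry `(a,b)` is `∂_{x_a}∂_{y_b} gi(x,y)`. -/
def hessXY {d1 d2 : ℕ} (gi : Vec d1 → Vec d2 → ℝ) (x : Vec d1) (y : Vec d2) :
    Matrix (Fin d1) (Fin d2) ℝ :=
  Matrix.of fun a b =>
    fderiv ℝ (fun x' => fderiv ℝ (gi x') y (EuclideanSpace.single b 1)) x
      (EuclideanSpace.single a 1)

/-- Extended mixing matrix `W ⊗ I_d`. -/
def kron1 {n : ℕ} (W : Matrix (Fin n) (Fin n) ℝ) (d : ℕ) :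
    Matrix (Fin n × Fin d) (Fin n × Fin d) ℝ :=
  W ⊗ₖ (1 : Matrix (Fin d) (Fin d) ℝ)

/-- `diag(W) ⊗ I_d`. -/
def kronDiag {n : ℕ} (W : Matrix (Fin n) (Fin n) ℝ) (d : ℕ) :
    Matrix (Fin n × Fin d) (Fin n × Fin d) ℝ :=
  (Matrix.diagonal fun i => W i i) ⊗ₖ (1 : Matrix (Fin d) (Fin d) ℝ)

/-- Assumption 1 of the paper: nonnegative, symmetric, doubly stochastic mixing matrix whose
`1`-eigenspace is the consensus direction, with diagonal entries in `[θ, Θ] ⊆ (0,1)`. -/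
structure IsMixingMatrix {n : ℕ} (W : Matrix (Fin n) (Fin n) ℝ) (θ Θ : ℝ) : Prop where
  symm : W.IsSymm
  nonneg : ∀ i j, 0 ≤ W i j
  row_sum : ∀ i, ∑ j, W i j = 1
  col_sum : ∀ j, ∑ i, W i j = 1
  null_iff : ∀ v : Fin n → ℝ, (1 - W) *ᵥ v = 0 ↔ ∃ c : ℝ, ∀ i, v i = c
  theta_pos : 0 < θ
  theta_le_diag : ∀ i, θ ≤ W i i
  diag_le_Theta : ∀ i, W i i ≤ Θ
  Theta_lt_one : Θ < 1

/-- `σ` is the spectral (`ℓ₂`-operator) norm of `W − (1/n) 1ₙ1ₙᵀ`, i.e. the mixing rate. -/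
def IsMixingRate {n : ℕ} (W : Matrix (Fin n) (Fin n) ℝ) (σ : ℝ) : Prop :=
  IsGreatest {c : ℝ | ∃ v : EuclideanSpace ℝ (Fin n), ‖v‖ = 1 ∧
    c = ‖Matrix.toEuclideanLin (W - Matrix.of fun _ _ => (1 / (n : ℝ))) v‖} σ

/-- `c` is the smallest nonzero eigenvalue of `A`. -/
def IsSmallestNonzeroEigenvalue {m : Type*} [Fintype m] [DecidableEq m]
    (A : Matrix m m ℝ) (c : ℝ) : Prop :=
  IsLeast {t : ℝ | t ≠ 0 ∧ Module.End.HasEigenvalue (Matrix.toEuclideanLin A) t} c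

/-- `c` is the largest eigenvalue of `A`. -/
def IsLargestEigenvalue {m : Type*} [Fintype m] [DecidableEq m]
    (A : Matrix m m ℝ) (c : ℝ) : Prop :=
  IsGreatest {t : ℝ | Module.End.HasEigenvalue (Matrix.toEuclideanLin A) t} c

/-- Concatenated partial gradient `∇ₓ𝐟(x,y)`. -/
def gradX {n d1 d2 : ℕ} (f : Fin n → Vec d1 → Vec d2 → ℝ) (x : BVec n d1) (y : BVec n d2) :
    BVec n d1 :=
  WithLp.toLp 2 (fun p : Fin n × Fin d1 => gradient (fun u => f p.1 u (blk y p.1)) (blk x p.1) p.2)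

/-- Concatenated partial gradient `∇_y𝐟(x,y)`. -/
def gradY {n d1 d2 : ℕ} (f : Fin n → Vec d1 → Vec d2 → ℝ) (x : BVec n d1) (y : BVec n d2) :
    BVec n d2 :=
  WithLp.toLp 2 (fun p : Fin n × Fin d2 => gradient (fun v => f p.1 (blk x p.1) v) (blk y p.1) p.2)

/-- Block-diagonal inner Hessian `∇²_y 𝐠(x,y)`. -/
def bigHessYY {n d1 d2 : ℕ} (g : Fin n → Vec d1 → Vec d2 → ℝ) (x : BVec n d1) (y : BVec n d2) :
    Matrix (Fin n × Fin d2) (Fin n × Fin d2) ℝ :=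
  blockDiag fun i => hessYY (g i) (blk x i) (blk y i)

/-- Block-diagonal mixed Hessian `∇²_{xy} 𝐠(x,y)`. -/
def bigHessXY {n d1 d2 : ℕ} (g : Fin n → Vec d1 → Vec d2 → ℝ) (x : BVec n d1) (y : BVec n d2) :
    Matrix (Fin n × Fin d1) (Fin n × Fin d2) ℝ :=
  blockDiag fun i => hessXY (g i) (blk x i) (blk y i)

/-- `H(x,y) := (I − W⊗I) + β ∇²_y 𝐠(x,y)`. -/
def Hmat {n d1 d2 : ℕ} (W : Matrix (Fin n) (Fin n) ℝ) (β : ℝ)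
    (g : Fin n → Vec d1 → Vec d2 → ℝ) (x : BVec n d1) (y : BVec n d2) :
    Matrix (Fin n × Fin d2) (Fin n × Fin d2) ℝ :=
  (1 - kron1 W d2) + β • bigHessYY g x y

/-- `D(x,y) := β ∇²_y 𝐠(x,y) + 2(I − diag(W⊗I))`. -/
def Dmat {n d1 d2 : ℕ} (W : Matrix (Fin n) (Fin n) ℝ) (β : ℝ)
    (g : Fin n → Vec d1 → Vec d2 → ℝ) (x : BVec n d1) (y : BVec n d2) :
    Matrix (Fin n × Fin d2) (Fin n × Fin d2) ℝ :=
  β • bigHessYY g x y + (2 : ℝ) • (1 - kronDiag W d2)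

/-- `B := I − 2 diag(W⊗I) + W⊗I`. -/
def Bmat {n : ℕ} (W : Matrix (Fin n) (Fin n) ℝ) (d : ℕ) :
    Matrix (Fin n × Fin d) (Fin n × Fin d) ℝ :=
  (1 : Matrix (Fin n × Fin d) (Fin n × Fin d) ℝ) - (2 : ℝ) • kronDiag W d + kron1 W d

/-- Penalized inner objective `G(x,y)`. -/
def Gpen {n d1 d2 : ℕ} (W : Matrix (Fin n) (Fin n) ℝ) (β : ℝ)
    (g : Fin n → Vec d1 → Vec d2 → ℝ) (x : BVec n d1) (y : BVec n d2) : ℝ :=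
  (1 / (2 * β)) * ⟪y, Matrix.toEuclideanLin (1 - kron1 W d2) y⟫ +
    ∑ i, g i (blk x i) (blk y i)

/-- `∇_y G(x,y) = (1/β)(I − W⊗I) y + ∇_y 𝐠(x,y)`. -/
def gradYG {n d1 d2 : ℕ} (W : Matrix (Fin n) (Fin n) ℝ) (β : ℝ)
    (g : Fin n → Vec d1 → Vec d2 → ℝ) (x : BVec n d1) (y : BVec n d2) : BVec n d2 :=
  (1 / β) • Matrix.toEuclideanLin (1 - kron1 W d2) y + gradY g x y

/-- Penalized outer objective `F(x) = F(x, y̌*(x))`, for a given inner-solution map `ycheck`. -/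
def Fpen {n d1 d2 : ℕ} (W : Matrix (Fin n) (Fin n) ℝ) (α : ℝ)
    (f : Fin n → Vec d1 → Vec d2 → ℝ) (ycheck : BVec n d1 → BVec n d2) (x : BVec n d1) : ℝ :=
  (1 / (2 * α)) * ⟪x, Matrix.toEuclideanLin (1 - kron1 W d1) x⟫ +
    ∑ i, f i (blk x i) (blk (ycheck x) i)

/-- Truncated Neumann-series approximation `Ĥ⁻¹_{(U)} = Σ_{u=0}^U (D⁻¹B)ᵘ D⁻¹
( = D^{-1/2} Σ_{u=0}^U (D^{-1/2} B D^{-1/2})ᵘ D^{-1/2})`. -/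
def truncInv {n d1 d2 : ℕ} (W : Matrix (Fin n) (Fin n) ℝ) (β : ℝ)
    (g : Fin n → Vec d1 → Vec d2 → ℝ) (U : ℕ) (x : BVec n d1) (y : BVec n d2) :
    Matrix (Fin n × Fin d2) (Fin n × Fin d2) ℝ :=
  ∑ u ∈ Finset.range (U + 1), ((Dmat W β g x y)⁻¹ * Bmat W d2) ^ u * (Dmat W β g x y)⁻¹

/-- DAGM hyper-gradient estimate `∇̂F(x,y)` (with `U`-truncated Neumann inverse). -/
def hyperGradHat {n d1 d2 : ℕ} (W : Matrix (Fin n) (Fin n) ℝ) (β α : ℝ)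
    (f g : Fin n → Vec d1 → Vec d2 → ℝ) (U : ℕ) (x : BVec n d1) (y : BVec n d2) : BVec n d1 :=
  (1 / α) • Matrix.toEuclideanLin (1 - kron1 W d1) x + gradX f x y
    - β • Matrix.toEuclideanLin (bigHessXY g x y * truncInv W β g U x y) (gradY f x y)

/-- Exact surrogate hyper-gradient `∇̃F(x,y)` (with the exact inverse `H(x,y)⁻¹`);
at `y = y̌*(x)` this is the true gradient `∇F(x, y̌*(x))` of the penalized problem. -/
def hyperGradExact {n d1 d2 : ℕ} (W : Matrix (Fin n) (Fin n) ℝ) (β α : ℝ)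
    (f g : Fin n → Vec d1 → Vec d2 → ℝ) (x : BVec n d1) (y : BVec n d2) : BVec n d1 :=
  (1 / α) • Matrix.toEuclideanLin (1 - kron1 W d1) x + gradX f x y
    - β • Matrix.toEuclideanLin (bigHessXY g x y * (Hmat W β g x y)⁻¹) (gradY f x y)

/-- Average of the blocks of a concatenated vector. -/
def blkAvg {n d : ℕ} (x : BVec n d) : Vec d := (1 / (n : ℝ)) • ∑ i, blk x i

end

/-!
Penalty-approximation bound for the inner solution (appendix lemma): for fixed `x`, with each
`gᵢ(xᵢ,·)` `μ_g`-strongly convex and continuous, if `y*(x)` minimizes `1ᵀ𝐠(x,·)` over the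
consensus subspace and `y̌*_β(x)` minimizes the `β`-penalized objective `G_β(x,·)`, then there
is `L̂_g > 0` independent of `β` with, for all `β ∈ (0,1]`,
`‖y*(x) − y̌*_β(x)‖ ≤ 2L̂_gβ/(1−σ) + 2L̂_g√β/(√(1−σ)√μ_g)`.
-/


section PAHelpers

open scoped RealInnerProductSpace
open Finset

private lemma pa_inner {ι : Type*} [Fintype ι] (y z : EuclideanSpace ℝ ι) :
    ⟪y, z⟫ = ∑ i, y i * z i := by
  simp [PiLp.inner_apply, RCLike.inner_apply]
  exact Finset.sum_congr rfl fun i _ => mul_comm _ _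

private lemma pa_normsq {ι : Type*} [Fintype ι] (y : EuclideanSpace ℝ ι) :
    ‖y‖^2 = ∑ i, (y i)^2 := by
  rw [← real_inner_self_eq_norm_sq]
  rw [pa_inner]; simp [sq]

private lemma pa_strong_min {E : Type*} [NormedAddCommGroup E] [InnerProductSpace ℝ E]
    {μ : ℝ} {f : E → ℝ}
    (hf : StrongConvexOn Set.univ μ f) {c : E} (hc : ∀ z, f c ≤ f z) (z : E) :
    f c + μ/4 * ‖z - c‖^2 ≤ f z := by
  have h := hf.2 (Set.mem_univ z) (Set.mem_univ c) (by norm_num : (0:ℝ) ≤ 1/2)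
    (by norm_num : (0:ℝ) ≤ 1/2) (by norm_num)
  simp only [smul_eq_mul] at h
  have h2 := hc ((1/2 : ℝ) • z + (1/2 : ℝ) • c)
  nlinarith [h, h2]

private lemma pa_convexOn {E : Type*} [NormedAddCommGroup E] [InnerProductSpace ℝ E]
    {μ : ℝ} (hμ : 0 ≤ μ) {f : E → ℝ}
    (hf : StrongConvexOn Set.univ μ f) : ConvexOn ℝ Set.univ f :=
  hf.convexOn (by intro r; dsimp; positivity)

private lemma pa_col {n : ℕ} (W : Matrix (Fin n) (Fin n) ℝ) (σ : ℝ)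
    (hrow : ∀ i, ∑ j, W i j = 1) (hcolsum : ∀ j, ∑ i, W i j = 1)
    (hTop : ∀ u : EuclideanSpace ℝ (Fin n),
      ‖Matrix.toEuclideanLin (W - Matrix.of fun _ _ => (1/(n:ℝ))) u‖ ≤ σ * ‖u‖)
    (hn : 0 < n) (v : EuclideanSpace ℝ (Fin n)) :
    (1 - σ) * (∑ i, (v i - (∑ j, v j)/n)^2) ≤ ∑ i, v i * (v i - ∑ j, W i j * v j) := by
  have hnR : (n : ℝ) ≠ 0 := Nat.cast_ne_zero.mpr hn.ne'
  set m : ℝ := (∑ j, v j)/n with hm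
  set u : EuclideanSpace ℝ (Fin n) := (WithLp.toLp 2 (fun i => v i - m) : EuclideanSpace ℝ (Fin n)) with hu
  have huapp : ∀ i, u i = v i - m := fun i => rfl
  have hsumu : ∑ i, u i = 0 := by
    simp only [huapp, Finset.sum_sub_distrib, Finset.sum_const, Finset.card_univ,
      Fintype.card_fin, nsmul_eq_mul, hm]
    field_simp
    simp
  have hvu : ∀ j, v j = u j + m := fun j => by rw [huapp]; ring
  have hD : ∀ i, v i - ∑ j, W i j * v j = u i - ∑ j, W i j * u j := by
    intro i
    have h1 : ∑ j, W i j * v j = (∑ j, W i j * u j) + m := by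
      calc ∑ j, W i j * v j = ∑ j, (W i j * u j + W i j * m) := by
            refine Finset.sum_congr rfl fun j _ => ?_
            rw [hvu j]; ring
        _ = (∑ j, W i j * u j) + (∑ j, W i j) * m := by
            rw [Finset.sum_add_distrib, Finset.sum_mul]
        _ = (∑ j, W i j * u j) + m := by rw [hrow i, one_mul]
    rw [h1, hvu i]; ring
  have hsumD : ∑ i, (u i - ∑ j, W i j * u j) = 0 := by
    rw [Finset.sum_sub_distrib]
    have : ∑ i, ∑ j, W i j * u j = ∑ j, u j := by
      rw [Finset.sum_comm]
      refine Finset.sum_congr rfl fun j _ => ?_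
      rw [← Finset.sum_mul, hcolsum j, one_mul]
    rw [this, sub_self]
  have h1 : ∑ i, v i * (v i - ∑ j, W i j * v j) = ∑ i, u i * (u i - ∑ j, W i j * u j) := by
    calc ∑ i, v i * (v i - ∑ j, W i j * v j)
        = ∑ i, (u i * (u i - ∑ j, W i j * u j) + m * (u i - ∑ j, W i j * u j)) := by
          refine Finset.sum_congr rfl fun i _ => ?_
          rw [hD i, hvu i]; ring
      _ = ∑ i, u i * (u i - ∑ j, W i j * u j) + m * ∑ i, (u i - ∑ j, W i j * u j) := by
          rw [Finset.sum_add_distrib, Finset.mul_sum]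
      _ = ∑ i, u i * (u i - ∑ j, W i j * u j) := by rw [hsumD, mul_zero, add_zero]
  have hTu : ∀ i, (Matrix.toEuclideanLin (W - Matrix.of fun _ _ => (1/(n:ℝ))) u) i
      = ∑ j, W i j * u j := by
    intro i
    rw [Matrix.toEuclideanLin_apply]
    simp only [PiLp.toLp_apply, Matrix.mulVec,
      dotProduct, Matrix.sub_apply, Matrix.of_apply, sub_mul, Finset.sum_sub_distrib]
    rw [← Finset.mul_sum, hsumu, mul_zero, sub_zero]
  have h2 : ∑ i, u i * (∑ j, W i j * u j) ≤ σ * ∑ i, (u i)^2 := by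
    have e1 : ∑ i, u i * (∑ j, W i j * u j)
        = ⟪u, Matrix.toEuclideanLin (W - Matrix.of fun _ _ => (1/(n:ℝ))) u⟫ := by
      rw [pa_inner]
      exact Finset.sum_congr rfl fun i _ => by rw [hTu i]
    rw [e1]
    calc ⟪u, Matrix.toEuclideanLin (W - Matrix.of fun _ _ => (1/(n:ℝ))) u⟫
        ≤ ‖u‖ * ‖Matrix.toEuclideanLin (W - Matrix.of fun _ _ => (1/(n:ℝ))) u‖ :=
          real_inner_le_norm _ _
      _ ≤ ‖u‖ * (σ * ‖u‖) := by
          have := hTop u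
          nlinarith [norm_nonneg u,
            norm_nonneg (Matrix.toEuclideanLin (W - Matrix.of fun _ _ => (1/(n:ℝ))) u)]
      _ = σ * ∑ i, (u i)^2 := by rw [← pa_normsq]; ring
  have h3 : ∑ i, u i * (u i - ∑ j, W i j * u j)
      = ∑ i, (u i)^2 - ∑ i, u i * (∑ j, W i j * u j) := by
    rw [← Finset.sum_sub_distrib]
    exact Finset.sum_congr rfl fun i _ => by ring
  have h4 : ∑ i, (v i - (∑ j, v j)/n)^2 = ∑ i, (u i)^2 := by
    refine Finset.sum_congr rfl fun i _ => ?_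
    rw [huapp i, hm]
  rw [h1, h3, h4]
  linarith

private lemma pa_lin_apply {n d : ℕ} (W : Matrix (Fin n) (Fin n) ℝ) (y : BVec n d)
    (p : Fin n × Fin d) :
    (Matrix.toEuclideanLin (1 - kron1 W d) y) p = y p - ∑ j, W p.1 j * y (j, p.2) := by
  rw [Matrix.toEuclideanLin_apply]
  simp [kron1, Matrix.mulVec, dotProduct, Matrix.sub_apply, Matrix.one_apply, sub_mul,
    Fintype.sum_prod_type, Matrix.kroneckerMap_apply,
    Finset.sum_sub_distrib, mul_ite, Prod.eq_iff_fst_eq_snd_eq, ite_and,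
    Finset.sum_ite_eq, Finset.sum_ite_eq']

private lemma pa_blk_norm {n d : ℕ} (y : BVec n d) :
    ‖y‖^2 = ∑ i, ‖blk y i‖^2 := by
  rw [pa_normsq]
  rw [Fintype.sum_prod_type]
  refine Finset.sum_congr rfl fun i _ => ?_
  rw [pa_normsq]
  simp [blk]

private lemma pa_qform {n d : ℕ} (W : Matrix (Fin n) (Fin n) ℝ) (y : BVec n d) :
    ⟪y, Matrix.toEuclideanLin (1 - kron1 W d) y⟫
      = ∑ a : Fin d, ∑ i, y (i,a) * (y (i,a) - ∑ j, W i j * y (j,a)) := by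
  rw [pa_inner, Fintype.sum_prod_type, Finset.sum_comm]
  refine Finset.sum_congr rfl fun a _ => Finset.sum_congr rfl fun i _ => ?_
  rw [pa_lin_apply]

end PAHelpers

set_option maxHeartbeats 1000000 in
theorem penalty_approximation_inner_solution {n d1 d2 : ℕ}
    (W : Matrix (Fin n) (Fin n) ℝ) (θ Θ : ℝ)
    (hW : IsMixingMatrix W θ Θ)
    (σ : ℝ) (hσ : IsMixingRate W σ) (hσ1 : σ < 1)
    (g : Fin n → Vec d1 → Vec d2 → ℝ)
    (μg : ℝ) (hμg : 0 < μg)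
    (x : BVec n d1)
    (hsc : ∀ i, StrongConvexOn Set.univ μg (g i (blk x i)))
    (hcont : ∀ i, Continuous (g i (blk x i)))
    (ystar : BVec n d2)
    (hconsensus : Matrix.toEuclideanLin (1 - kron1 W d2) ystar = 0)
    (hystar : ∀ y : BVec n d2, Matrix.toEuclideanLin (1 - kron1 W d2) y = 0 →
      ∑ i, g i (blk x i) (blk ystar i) ≤ ∑ i, g i (blk x i) (blk y i))
    (ycheck : ℝ → BVec n d2)
    (hycheck : ∀ β : ℝ, 0 < β → β ≤ 1 →
      ∀ y : BVec n d2, Gpen W β g x (ycheck β) ≤ Gpen W β g x y) :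
    ∃ Lhat : ℝ, 0 < Lhat ∧ ∀ β : ℝ, 0 < β → β ≤ 1 →
      ‖ystar - ycheck β‖ ≤
        2 * Lhat * β / (1 - σ) +
          2 * Lhat * Real.sqrt β / (Real.sqrt (1 - σ) * Real.sqrt μg) := by
  classical
  -- basic positivity facts
  have hn : 0 < n := by
    obtain ⟨⟨v, hv1, -⟩, -⟩ := hσ
    rcases Nat.eq_zero_or_pos n with h | h
    · subst h
      have hv0 : v = 0 := by ext i; exact i.elim0
      rw [hv0, norm_zero] at hv1
      norm_num at hv1
    · exact h
  have hσ0 : 0 ≤ σ := by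
    obtain ⟨⟨v, hv1, hveq⟩, -⟩ := hσ
    rw [hveq]; positivity
  have h1σ : (0:ℝ) < 1 - σ := by linarith
  have hnR : (n : ℝ) ≠ 0 := Nat.cast_ne_zero.mpr hn.ne'
  -- operator norm bound from the mixing rate
  have hTop : ∀ u : EuclideanSpace ℝ (Fin n),
      ‖Matrix.toEuclideanLin (W - Matrix.of fun _ _ => (1/(n:ℝ))) u‖ ≤ σ * ‖u‖ := by
    intro u
    rcases eq_or_ne u 0 with h | h
    · simp [h]
    · have hu : ‖u‖ ≠ 0 := norm_ne_zero_iff.mpr h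
      have hu0 : (0:ℝ) < ‖u‖ := norm_pos_iff.mpr h
      have hmem : ‖Matrix.toEuclideanLin (W - Matrix.of fun _ _ => (1/(n:ℝ))) (‖u‖⁻¹ • u)‖
          ∈ {c : ℝ | ∃ v : EuclideanSpace ℝ (Fin n), ‖v‖ = 1 ∧
            c = ‖Matrix.toEuclideanLin (W - Matrix.of fun _ _ => (1/(n:ℝ))) v‖} := by
        refine ⟨‖u‖⁻¹ • u, ?_, rfl⟩
        rw [norm_smul, norm_inv, norm_norm, inv_mul_cancel₀ hu]
      have h2 := hσ.2 hmem
      rw [_root_.map_smul, norm_smul, norm_inv, norm_norm] at h2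
      calc ‖Matrix.toEuclideanLin (W - Matrix.of fun _ _ => (1/(n:ℝ))) u‖
          = ‖u‖ * (‖u‖⁻¹ * ‖Matrix.toEuclideanLin (W - Matrix.of fun _ _ => (1/(n:ℝ))) u‖) := by
            field_simp
        _ ≤ ‖u‖ * σ := by
            exact mul_le_mul_of_nonneg_left h2 (norm_nonneg u)
        _ = σ * ‖u‖ := mul_comm _ _
  -- quadratic-form lower bound via columns
  have hqlow : ∀ y : BVec n d2,
      (1 - σ) * (∑ a : Fin d2, ∑ i, (y (i,a) - (∑ j, y (j,a))/n)^2)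
        ≤ ⟪y, Matrix.toEuclideanLin (1 - kron1 W d2) y⟫ := by
    intro y
    rw [pa_qform]
    rw [Finset.mul_sum]
    refine Finset.sum_le_sum fun a _ => ?_
    exact pa_col W σ hW.row_sum hW.col_sum hTop hn (WithLp.toLp 2 (fun i => y (i,a)) : EuclideanSpace ℝ (Fin n))
  have hqpos : ∀ y : BVec n d2, 0 ≤ ⟪y, Matrix.toEuclideanLin (1 - kron1 W d2) y⟫ := by
    intro y
    refine le_trans ?_ (hqlow y)
    positivity
  -- strong convexity of the sum φ
  have hblkadd : ∀ (a b : ℝ) (y z : BVec n d2) (i : Fin n),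
      blk (a • y + b • z) i = a • blk y i + b • blk z i := by
    intro a b y z i; ext t; simp [blk]
  have hblksub : ∀ (y z : BVec n d2) (i : Fin n), blk y i - blk z i = blk (y - z) i := by
    intro y z i; ext t; simp [blk]
  have hφsc : StrongConvexOn Set.univ μg
      (fun y : BVec n d2 => ∑ i, g i (blk x i) (blk y i)) := by
    refine ⟨convex_univ, ?_⟩
    intro y _ z _ a b ha hb hab
    simp only [smul_eq_mul]
    have hkey : ∀ i : Fin n, g i (blk x i) (blk (a • y + b • z) i)
        ≤ a * g i (blk x i) (blk y i) + b * g i (blk x i) (blk z i)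
          - a * b * (μg/2 * ‖blk y i - blk z i‖^2) := by
      intro i
      rw [hblkadd a b y z i]
      have := (hsc i).2 (Set.mem_univ (blk y i)) (Set.mem_univ (blk z i)) ha hb hab
      simpa using this
    calc ∑ i, g i (blk x i) (blk (a • y + b • z) i)
        ≤ ∑ i, (a * g i (blk x i) (blk y i) + b * g i (blk x i) (blk z i)
            - a * b * (μg/2 * ‖blk y i - blk z i‖^2)) := Finset.sum_le_sum fun i _ => hkey i
      _ = a * (∑ i, g i (blk x i) (blk y i)) + b * (∑ i, g i (blk x i) (blk z i))
            - a * b * (μg/2 * ∑ i, ‖blk y i - blk z i‖^2) := by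
          rw [Finset.sum_sub_distrib, Finset.sum_add_distrib, ← Finset.mul_sum, ← Finset.mul_sum,
            ← Finset.mul_sum, ← Finset.mul_sum]
      _ = a * (∑ i, g i (blk x i) (blk y i)) + b * (∑ i, g i (blk x i) (blk z i))
            - a * b * (μg/2 * ‖y - z‖^2) := by
          rw [show ∑ i, ‖blk y i - blk z i‖^2 = ‖y - z‖^2 from ?_]
          rw [pa_blk_norm (y - z)]
          exact Finset.sum_congr rfl fun i _ => by rw [hblksub y z i]
  have hφconv : ConvexOn ℝ Set.univ (fun y : BVec n d2 => ∑ i, g i (blk x i) (blk y i)) :=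
    pa_convexOn hμg.le hφsc
  -- continuity of φ
  have hφcont : Continuous (fun y : BVec n d2 => ∑ i, g i (blk x i) (blk y i)) := by
    refine continuous_finset_sum _ fun i _ => (hcont i).comp ?_
    let blkLM : BVec n d2 →ₗ[ℝ] Vec d2 :=
      { toFun := fun y => blk y i, map_add' := fun p q => rfl, map_smul' := fun c p => by ext; simp [blk] }
    exact blkLM.continuous_of_finiteDimensional
  -- strong convexity of the penalized objective
  have hGsc : ∀ β : ℝ, 0 < β → StrongConvexOn Set.univ μg (Gpen W β g x) := by
    intro β hβ
    refine ⟨convex_univ, ?_⟩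
    intro y _ z _ a b ha hb hab
    simp only [Gpen, smul_eq_mul]
    have hb' : b = 1 - a := by linarith
    subst hb'
    set A := Matrix.toEuclideanLin (1 - kron1 W d2) with hA
    have e1 : ⟪a • y + (1-a) • z, A (a • y + (1-a) • z)⟫
        = a*a*⟪y, A y⟫ + a*(1-a)*⟪y, A z⟫ + a*(1-a)*⟪z, A y⟫ + (1-a)*(1-a)*⟪z, A z⟫ := by
      simp only [map_add, _root_.map_smul, inner_add_left, inner_add_right, real_inner_smul_left,
        real_inner_smul_right]
      ring
    have e2 : ⟪y - z, A (y - z)⟫ = ⟪y, A y⟫ - ⟪y, A z⟫ - ⟪z, A y⟫ + ⟪z, A z⟫ := by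
      simp only [map_sub, inner_sub_left, inner_sub_right]
      ring
    have hqid : ⟪a • y + (1-a) • z, A (a • y + (1-a) • z)⟫
        = a*⟪y, A y⟫ + (1-a)*⟪z, A z⟫ - a*(1-a)*⟪y - z, A (y - z)⟫ := by
      rw [e1, e2]; ring
    have hφ := hφsc.2 (Set.mem_univ y) (Set.mem_univ z) ha hb (by linarith)
    simp only [smul_eq_mul] at hφ
    have hQ : 0 ≤ ⟪y - z, A (y - z)⟫ := hqpos (y - z)
    have hβ2 : (0:ℝ) < 1/(2*β) := by positivity
    have hab2 : 0 ≤ a * (1-a) := mul_nonneg ha hb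
    rw [hqid]
    have hterm : 1/(2*β) * (a*⟪y, A y⟫ + (1-a)*⟪z, A z⟫ - a*(1-a)*⟪y - z, A (y - z)⟫)
        ≤ a * (1/(2*β) * ⟪y, A y⟫) + (1-a) * (1/(2*β) * ⟪z, A z⟫) := by
      have : 0 ≤ 1/(2*β) * (a*(1-a)*⟪y - z, A (y - z)⟫) :=
        mul_nonneg hβ2.le (mul_nonneg hab2 hQ)
      ring_nf
      ring_nf at this
      linarith
    linarith [hφ, hterm]
  -- sublevel-set boundedness
  obtain ⟨ym, hymball, hm1'⟩ := (isCompact_closedBall ystar 1).exists_isMinOn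
    ⟨ystar, Metric.mem_closedBall_self zero_le_one⟩ hφcont.continuousOn
  have hm1 := isMinOn_iff.mp hm1'
  set R0 : ℝ := 1 + 2*((∑ i, g i (blk x i) (blk ystar i)) - (∑ i, g i (blk x i) (blk ym i)))/μg
    with hR0
  have hymlee : (∑ i, g i (blk x i) (blk ym i)) ≤ ∑ i, g i (blk x i) (blk ystar i) :=
    hm1 ystar (Metric.mem_closedBall_self zero_le_one)
  have hR0ge1 : (1:ℝ) ≤ R0 := by
    rw [hR0]
    have : 0 ≤ 2*((∑ i, g i (blk x i) (blk ystar i)) - (∑ i, g i (blk x i) (blk ym i)))/μg := by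
      apply div_nonneg _ hμg.le
      linarith
    linarith
  have hsub : ∀ y : BVec n d2,
      (∑ i, g i (blk x i) (blk y i)) ≤ (∑ i, g i (blk x i) (blk ystar i)) →
      ‖y - ystar‖ ≤ R0 := by
    intro y hy
    by_cases hr : ‖y - ystar‖ ≤ 1
    · linarith
    · push_neg at hr
      set r := ‖y - ystar‖ with hrdef
      have hrpos : (0:ℝ) < r := by linarith
      have hrinv : 0 ≤ r⁻¹ := inv_nonneg.mpr hrpos.le
      have hrinvle : r⁻¹ ≤ 1 := by
        rw [inv_le_one_iff₀]; right; linarith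
      have hco := hφsc.2 (Set.mem_univ y) (Set.mem_univ ystar) hrinv
        (by linarith : (0:ℝ) ≤ 1 - r⁻¹) (by ring)
      simp only [smul_eq_mul] at hco
      have hpball : r⁻¹ • y + (1 - r⁻¹) • ystar ∈ Metric.closedBall ystar 1 := by
        rw [Metric.mem_closedBall, dist_eq_norm]
        have : r⁻¹ • y + (1 - r⁻¹) • ystar - ystar = r⁻¹ • (y - ystar) := by
          rw [sub_smul, one_smul, smul_sub]; abel
        rw [this, norm_smul, norm_inv, norm_norm, ← hrdef, inv_mul_cancel₀ hrpos.ne']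
      have hmp := hm1 _ hpball
      have hkey : r⁻¹ * (1 - r⁻¹) * (μg/2 * r^2) = μg/2 * (r - 1) := by
        field_simp
      rw [← hrdef] at hco
      rw [hkey] at hco
      have hy2 : r⁻¹ * (∑ i, g i (blk x i) (blk y i))
          ≤ r⁻¹ * (∑ i, g i (blk x i) (blk ystar i)) :=
        mul_le_mul_of_nonneg_left hy hrinv
      have hr1 : r - 1 ≤ 2*((∑ i, g i (blk x i) (blk ystar i))
          - (∑ i, g i (blk x i) (blk ym i)))/μg := by
        rw [le_div_iff₀ hμg]
        have e : (1 - r⁻¹) * (∑ i, g i (blk x i) (blk ystar i))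
            = (∑ i, g i (blk x i) (blk ystar i))
              - r⁻¹ * (∑ i, g i (blk x i) (blk ystar i)) := by ring
        linarith [hco, hmp, hy2, e]
      rw [hR0]
      linarith
  set R : ℝ := ‖ystar‖ + R0 with hRdef
  have hRpos : (0:ℝ) < R := by
    have := norm_nonneg ystar
    rw [hRdef]; linarith
  -- sup and inf of φ on the big ball
  obtain ⟨zM, hzM, hMax'⟩ := (isCompact_closedBall (0:BVec n d2) (2*R+1)).exists_isMaxOn
    ⟨0, Metric.mem_closedBall_self (by linarith)⟩ hφcont.continuousOn
  have hMax := isMaxOn_iff.mp hMax'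
  obtain ⟨zm, hzm, hMin'⟩ := (isCompact_closedBall (0:BVec n d2) (2*R+1)).exists_isMinOn
    ⟨0, Metric.mem_closedBall_self (by linarith)⟩ hφcont.continuousOn
  have hMin := isMinOn_iff.mp hMin'
  set L : ℝ := (∑ i, g i (blk x i) (blk zM i)) - (∑ i, g i (blk x i) (blk zm i)) with hLdef
  have hL0 : 0 ≤ L := by
    rw [hLdef]
    have := hMin zM hzM
    linarith
  -- one-sided Lipschitz estimate on the ball of radius R
  have hLip : ∀ aa bb : BVec n d2, ‖aa‖ ≤ R → ‖bb‖ ≤ R →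
      (∑ i, g i (blk x i) (blk aa i)) ≤ (∑ i, g i (blk x i) (blk bb i)) + L * ‖aa - bb‖ := by
    intro aa bb haa hbb
    rcases eq_or_ne aa bb with h | h
    · subst h; simp
    · set r := ‖aa - bb‖ with hrdef
      have hrpos : (0:ℝ) < r := by
        rw [hrdef]; exact norm_pos_iff.mpr (sub_ne_zero.mpr h)
      set z : BVec n d2 := aa + r⁻¹ • (aa - bb) with hz
      have hzball : z ∈ Metric.closedBall (0:BVec n d2) (2*R+1) := by
        rw [Metric.mem_closedBall, dist_zero_right]
        calc ‖z‖ ≤ ‖aa‖ + ‖r⁻¹ • (aa - bb)‖ := norm_add_le _ _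
          _ = ‖aa‖ + 1 := by
              rw [norm_smul, norm_inv, norm_norm, ← hrdef, inv_mul_cancel₀ hrpos.ne']
          _ ≤ 2*R + 1 := by linarith [hRpos.le]
      have hbball : bb ∈ Metric.closedBall (0:BVec n d2) (2*R+1) := by
        rw [Metric.mem_closedBall, dist_zero_right]; linarith
      set t : ℝ := r/(r+1) with ht
      have htpos : 0 ≤ t := by positivity
      have ht1 : t ≤ 1 := by
        rw [ht, div_le_one (by linarith)]; linarith
      have htr : t ≤ r := by
        rw [ht, div_le_iff₀ (by linarith)]
        nlinarith [sq_nonneg r]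
      have htrinv : t * r⁻¹ = 1 - t := by
        rw [ht]
        field_simp
        ring
      have hco : aa = t • z + (1-t) • bb := by
        rw [hz, smul_add, smul_smul, htrinv]
        module
      have hcv := hφconv.2 (Set.mem_univ z) (Set.mem_univ bb) htpos
        (by linarith : (0:ℝ) ≤ 1 - t) (by ring)
      simp only [smul_eq_mul] at hcv
      rw [← hco] at hcv
      have hzb : (∑ i, g i (blk x i) (blk z i)) - (∑ i, g i (blk x i) (blk bb i)) ≤ L := by
        rw [hLdef]
        have h1 := hMax z hzball
        have h2 := hMin bb hbball
        linarith
      have h3 : t * ((∑ i, g i (blk x i) (blk z i)) - (∑ i, g i (blk x i) (blk bb i)))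
          ≤ t * L := mul_le_mul_of_nonneg_left hzb htpos
      have h4 : t * L ≤ r * L := mul_le_mul_of_nonneg_right htr hL0
      nlinarith [hcv, h3, h4]
  clear_value L R
  -- the constant
  refine ⟨2*L + 1, by linarith, ?_⟩
  intro β hβ0 hβ1
  set c : BVec n d2 := ycheck β with hcdef
  set t : ℝ := ‖ystar - c‖ with htdef
  -- consensus projection of c
  set yb : BVec n d2 := (WithLp.toLp 2 (fun p : Fin n × Fin d2 => (∑ j, c (j, p.2))/n) : BVec n d2) with hyb
  have hybapp : ∀ p : Fin n × Fin d2, yb p = (∑ j, c (j, p.2))/n := fun p => rfl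
  have hAyb : Matrix.toEuclideanLin (1 - kron1 W d2) yb = 0 := by
    ext p
    rw [pa_lin_apply]
    have : ∑ j, W p.1 j * yb (j, p.2) = yb p := by
      calc ∑ j, W p.1 j * yb (j, p.2) = ∑ j, W p.1 j * yb p := rfl
        _ = (∑ j, W p.1 j) * yb p := by rw [← Finset.sum_mul]
        _ = yb p := by rw [hW.row_sum p.1, one_mul]
    rw [this, sub_self]
    rfl
  have hstar_le : (∑ i, g i (blk x i) (blk ystar i)) ≤ ∑ i, g i (blk x i) (blk yb i) :=
    hystar yb hAyb
  -- strong-convexity minimum growth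
  have hmin : Gpen W β g x c + μg/4 * ‖ystar - c‖^2 ≤ Gpen W β g x ystar :=
    pa_strong_min (hGsc β hβ0) (hycheck β hβ0 hβ1) ystar
  have hGstar : Gpen W β g x ystar = ∑ i, g i (blk x i) (blk ystar i) := by
    simp only [Gpen, hconsensus, inner_zero_right, mul_zero, zero_add]
  -- penalty lower bound at c
  have hwnorm : ‖c - yb‖^2 = ∑ a : Fin d2, ∑ i, (c (i,a) - (∑ j, c (j,a))/n)^2 := by
    rw [pa_normsq, Fintype.sum_prod_type, Finset.sum_comm]
    rfl
  have hqlowc : (1 - σ) * ‖c - yb‖^2 ≤ ⟪c, Matrix.toEuclideanLin (1 - kron1 W d2) c⟫ := by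
    rw [hwnorm]
    exact hqlow c
  -- yb is in the ball of radius R
  have horth : ⟪c - yb, yb⟫ = 0 := by
    rw [pa_inner, Fintype.sum_prod_type, Finset.sum_comm]
    rw [show (0:ℝ) = ∑ _a : Fin d2, (0:ℝ) from by simp]
    refine Finset.sum_congr rfl fun a _ => ?_
    have hterm : ∀ i : Fin n, (c - yb) (i, a) * yb (i, a)
        = (c (i,a) - (∑ j, c (j,a))/n) * ((∑ j, c (j,a))/n) := fun i => rfl
    rw [Finset.sum_congr rfl fun i _ => hterm i, ← Finset.sum_mul]
    have : ∑ i, (c (i,a) - (∑ j, c (j,a))/n) = 0 := by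
      rw [Finset.sum_sub_distrib, Finset.sum_const, Finset.card_univ, Fintype.card_fin,
        nsmul_eq_mul]
      field_simp
      simp
    rw [this, zero_mul]
  have hybnorm : ‖yb‖ ≤ ‖c‖ := by
    have hexp := norm_add_sq_real (c - yb) yb
    rw [show c - yb + yb = c from by abel, horth] at hexp
    have h2 : ‖yb‖^2 ≤ ‖c‖^2 := by nlinarith [sq_nonneg ‖c - yb‖]
    calc ‖yb‖ = Real.sqrt (‖yb‖^2) := (Real.sqrt_sq (norm_nonneg _)).symm
      _ ≤ Real.sqrt (‖c‖^2) := Real.sqrt_le_sqrt h2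
      _ = ‖c‖ := Real.sqrt_sq (norm_nonneg _)
  -- main chain
  have hmain : 1/(2*β) * ⟪c, Matrix.toEuclideanLin (1 - kron1 W d2) c⟫
      + (∑ i, g i (blk x i) (blk c i)) + μg/4 * t^2
      ≤ ∑ i, g i (blk x i) (blk ystar i) := by
    have h := hmin
    rw [hGstar] at h
    simp only [Gpen] at h
    rw [← htdef] at h
    linarith [h]
  have hcphi : (∑ i, g i (blk x i) (blk c i)) ≤ ∑ i, g i (blk x i) (blk ystar i) := by
    have h0 := hqpos c
    have h1 : 0 ≤ 1/(2*β) * ⟪c, Matrix.toEuclideanLin (1 - kron1 W d2) c⟫ :=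
      mul_nonneg (by positivity) h0
    have h2 : 0 ≤ μg/4 * t^2 := by positivity
    linarith [hmain]
  have hcR : ‖c‖ ≤ R := by
    have h1 := hsub c hcphi
    calc ‖c‖ = ‖(c - ystar) + ystar‖ := by rw [show c - ystar + ystar = c from by abel]
      _ ≤ ‖c - ystar‖ + ‖ystar‖ := norm_add_le _ _
      _ ≤ R := by rw [hRdef]; linarith
  have hybR : ‖yb‖ ≤ R := le_trans hybnorm hcR
  have hlip2 : (∑ i, g i (blk x i) (blk yb i))
      ≤ (∑ i, g i (blk x i) (blk c i)) + L * ‖yb - c‖ := hLip yb c hybR hcR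
  set s : ℝ := ‖c - yb‖ with hsdef
  have hsnn : 0 ≤ s := hsdef ▸ norm_nonneg _
  have hybc : ‖yb - c‖ = s := by rw [hsdef, norm_sub_rev]
  rw [hybc] at hlip2
  have htnn : 0 ≤ t := htdef ▸ norm_nonneg _
  clear_value c t yb s
  have hkey2 : (1-σ)/(2*β) * s^2 + μg/4 * t^2 ≤ L * s := by
    have hq := hqlowc
    have hmul : 1/(2*β) * ((1-σ) * s^2)
        ≤ 1/(2*β) * ⟪c, Matrix.toEuclideanLin (1 - kron1 W d2) c⟫ :=
      mul_le_mul_of_nonneg_left hq (by positivity)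
    have he : 1/(2*β) * ((1-σ)*s^2) = (1-σ)/(2*β) * s^2 := by ring
    rw [he] at hmul
    linarith only [hmain, hstar_le, hlip2, hmul]
  have hsle : s ≤ 2*β*L/(1-σ) := by
    rcases eq_or_lt_of_le hsnn with h | h
    · rw [← h]; positivity
    · rw [le_div_iff₀ h1σ]
      have h2 : (1-σ)/(2*β) * s^2 ≤ L * s := by
        have : 0 ≤ μg/4 * t^2 := by positivity
        linarith [hkey2]
      have h3 : (1-σ) * s^2 ≤ 2*β*(L*s) := by
        have h4 := mul_le_mul_of_nonneg_left h2 (by positivity : (0:ℝ) ≤ 2*β)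
        calc (1-σ)*s^2 = 2*β*((1-σ)/(2*β)*s^2) := by
              field_simp
          _ ≤ 2*β*(L*s) := h4
      nlinarith [h3, h]
  have ht2 : μg/4 * t^2 ≤ 2*β*L^2/(1-σ) := by
    have h4 : L * s ≤ L * (2*β*L/(1-σ)) := mul_le_mul_of_nonneg_left hsle hL0
    have h5 : 0 ≤ (1-σ)/(2*β) * s^2 := by positivity
    have he : L * (2*β*L/(1-σ)) = 2*β*L^2/(1-σ) := by ring
    linarith only [hkey2, h4, he, h5]
  set B : ℝ := 2*(2*L+1)*Real.sqrt β/(Real.sqrt (1-σ)*Real.sqrt μg) with hB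
  have hBnn : 0 ≤ B := by rw [hB]; positivity
  have hB2 : B^2 = 4*(2*L+1)^2*β/((1-σ)*μg) := by
    rw [hB, div_pow, mul_pow, mul_pow, mul_pow, Real.sq_sqrt hβ0.le, Real.sq_sqrt h1σ.le,
      Real.sq_sqrt hμg.le]
    ring
  have ht2' : t^2 ≤ B^2 := by
    rw [hB2, le_div_iff₀ (by positivity)]
    have h6 : μg/4*t^2*(1-σ) ≤ 2*β*L^2 := by
      have h7 := mul_le_mul_of_nonneg_right ht2 h1σ.le
      calc μg/4*t^2*(1-σ) ≤ (2*β*L^2/(1-σ))*(1-σ) := h7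
        _ = 2*β*L^2 := by field_simp
    nlinarith [h6, hL0, hβ0.le, mul_nonneg (mul_nonneg hβ0.le hL0) hL0,
      mul_nonneg hβ0.le hL0]
  have htB : t ≤ B := by
    calc t = Real.sqrt (t^2) := (Real.sqrt_sq htnn).symm
      _ ≤ Real.sqrt (B^2) := Real.sqrt_le_sqrt ht2'
      _ = B := Real.sqrt_sq hBnn
  have hfirst : 0 ≤ 2*(2*L+1)*β/(1-σ) := by positivity
  calc t ≤ B := htB
    _ ≤ 2 * (2*L+1) * β / (1 - σ) + B := by linarith
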